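/- Let d be a positive integer and let G be a finite simple connected d-regular graph with no C3 or C5 as a subgraph. If every edge of G has positive Lin–Lu–Yau curvature, then κ_LLY(x,y) = 2/d for every edge xy of G. -/

import Mathlib

open Finset

noncomputable section

/-- The (normalized) graph Laplacian `Δf(x) = (1/deg x) ∑_{y ~ x} (f y - f x)`. -/
def graphLap {V : Type*} [Fintype V] (G : SimpleGraph V) [DecidableRel G.Adj]
    (f : V → ℝ) (x : V) : ℝ :=
  (G.degree x : ℝ)⁻¹ * ∑ y ∈ G.neighborFinset x, (f y - f x)

/-- `f` is 1-Lipschitz with respect to the graph distance. -/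
def IsLip1 {V : Type*} (G : SimpleGraph V) (f : V → ℝ) : Prop :=
  ∀ u v : V, |f u - f v| ≤ G.dist u v

/-- Lin–Lu–Yau curvature of a pair of vertices, via the limit-free
(Münch–Wojciechowski) formulation. -/
def kappaLLY {V : Type*} [Fintype V] (G : SimpleGraph V) [DecidableRel G.Adj]
    (x y : V) : ℝ :=
  sInf { r : ℝ | ∃ f : V → ℝ, IsLip1 G f ∧ f y - f x = G.dist x y ∧
      r = (graphLap G f x - graphLap G f y) / G.dist x y }

/-- `G` contains a cycle of length `n` as a subgraph: `n` distinct vertices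
arranged cyclically so that consecutive ones are adjacent. -/
def HasCycleLen {V : Type*} (G : SimpleGraph V) (n : ℕ) [NeZero n] : Prop :=
  ∃ c : Fin n → V, Function.Injective c ∧ ∀ i : Fin n, G.Adj (c i) (c (i + 1))

lemma noTri {V : Type*} {G : SimpleGraph V} (h3 : ¬ HasCycleLen G 3)
    {a b c : V} (hab : G.Adj a b) (hbc : G.Adj b c) (hca : G.Adj c a) : False := by
  apply h3
  refine ⟨![a, b, c], ?_, ?_⟩
  · intro i j hij
    fin_cases i <;> fin_cases j <;>
      simp_all [hab.ne, hbc.ne, hca.ne, hab.ne', hbc.ne', hca.ne']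
  · intro i; fin_cases i <;> simp [hab, hbc, hca]

lemma noPent {V : Type*} {G : SimpleGraph V} (h5 : ¬ HasCycleLen G 5)
    {a b c d e : V} (hab : G.Adj a b) (hbc : G.Adj b c) (hcd : G.Adj c d)
    (hde : G.Adj d e) (hea : G.Adj e a)
    (hac : a ≠ c) (had : a ≠ d) (hbd : b ≠ d) (hbe : b ≠ e) (hce : c ≠ e) : False := by
  apply h5
  refine ⟨![a, b, c, d, e], ?_, ?_⟩
  · intro i j hij
    fin_cases i <;> fin_cases j <;>
      simp_all [hab.ne, hbc.ne, hcd.ne, hde.ne, hea.ne,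
        hab.ne', hbc.ne', hcd.ne', hde.ne', hea.ne', hac.symm, had.symm, hbd.symm,
        hbe.symm, hce.symm]
  · intro i; fin_cases i <;> simp [hab, hbc, hcd, hde, hea]

lemma two_le_dist {V : Type*} {G : SimpleGraph V} (hconn : G.Connected)
    {u v : V} (hne : u ≠ v) (hna : ¬ G.Adj u v) : 2 ≤ G.dist u v := by
  have h1 := hconn.pos_dist_of_ne hne
  have h2 : G.dist u v ≠ 1 := fun h => hna (SimpleGraph.dist_eq_one_iff_adj.mp h)
  omega

lemma mid_of_dist_two {V : Type*} {G : SimpleGraph V} (hconn : G.Connected)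
    {u v : V} (h : G.dist u v = 2) : ∃ m, G.Adj u m ∧ G.Adj m v := by
  obtain ⟨p, hp⟩ := hconn.exists_walk_length_eq_dist u v
  rw [h] at hp
  cases p with
  | nil => simp at hp
  | cons h1 q =>
    cases q with
    | nil => simp at hp
    | cons h2 r =>
      cases r with
      | nil => exact ⟨_, h1, h2⟩
      | cons h3 r' => simp [SimpleGraph.Walk.length_cons] at hp

lemma three_le_dist {V : Type*} {G : SimpleGraph V} (hconn : G.Connected)
    {u v : V} (hne : u ≠ v) (hna : ¬ G.Adj u v)
    (hmid : ∀ m, ¬ (G.Adj u m ∧ G.Adj m v)) : 3 ≤ G.dist u v := by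
  have h1 := two_le_dist hconn hne hna
  have h2 : G.dist u v ≠ 2 := by
    intro h
    obtain ⟨m, hm⟩ := mid_of_dist_two hconn h
    exact hmid m hm
  omega

lemma abs_min_sub_min (a b c : ℝ) : |min a c - min b c| ≤ |a - b| := by
  rw [abs_sub_le_iff]
  constructor
  · rcases le_total b c with h | h
    · rw [min_eq_left h]
      linarith [min_le_left a c, le_abs_self (a - b)]
    · rw [min_eq_right h]
      linarith [min_le_right a c, abs_nonneg (a - b)]
  · rcases le_total a c with h | h
    · rw [min_eq_left h]
      linarith [min_le_left b c, neg_abs_le (a - b)]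
    · rw [min_eq_right h]
      linarith [min_le_right b c, abs_nonneg (a - b)]

lemma lipExtension {V : Type*} {G : SimpleGraph V} (hconn : G.Connected)
    (B : Finset V) (hB : B.Nonempty) (g : V → ℝ)
    (hcons : ∀ u ∈ B, ∀ v ∈ B, g v ≤ g u + G.dist u v) :
    ∃ F : V → ℝ, IsLip1 G F ∧ ∀ v ∈ B, F v = g v := by
  refine ⟨fun v => B.inf' hB (fun u => g u + G.dist u v), ?_, ?_⟩
  · intro a b
    show |B.inf' hB (fun u => g u + (G.dist u a : ℝ)) -
        B.inf' hB (fun u => g u + (G.dist u b : ℝ))| ≤ (G.dist a b : ℝ)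
    rw [abs_sub_le_iff]
    constructor
    · obtain ⟨u, hu, hu2⟩ := Finset.exists_mem_eq_inf' hB (fun u => g u + (G.dist u b : ℝ))
      rw [hu2]
      have h := Finset.inf'_le (fun u => g u + (G.dist u a : ℝ)) hu
      have htri : (G.dist u a : ℝ) ≤ G.dist u b + G.dist a b := by
        have h' : G.dist u a ≤ G.dist u b + G.dist b a := hconn.dist_triangle
        rw [SimpleGraph.dist_comm (u := b) (v := a)] at h'
        exact_mod_cast h'
      linarith
    · obtain ⟨u, hu, hu2⟩ := Finset.exists_mem_eq_inf' hB (fun u => g u + (G.dist u a : ℝ))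
      rw [hu2]
      have h := Finset.inf'_le (fun u => g u + (G.dist u b : ℝ)) hu
      have htri : (G.dist u b : ℝ) ≤ G.dist u a + G.dist a b := by
        have h' : G.dist u b ≤ G.dist u a + G.dist a b := hconn.dist_triangle
        exact_mod_cast h'
      linarith
  · intro v hv
    show B.inf' hB (fun u => g u + (G.dist u v : ℝ)) = g v
    apply le_antisymm
    · have h := Finset.inf'_le (fun u => g u + (G.dist u v : ℝ)) hv
      simp only [SimpleGraph.dist_self, Nat.cast_zero, add_zero] at h
      exact h
    · exact Finset.le_inf' hB _ (fun u hu => hcons u hu v hv)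

theorem regular_constant_curvature {V : Type*} [Fintype V] (G : SimpleGraph V)
    [DecidableRel G.Adj] (hconn : G.Connected)
    (d : ℕ) (hd : 0 < d) (hreg : G.IsRegularOfDegree d)
    (h3 : ¬ HasCycleLen G 3) (h5 : ¬ HasCycleLen G 5)
    (hpos : ∀ u v : V, G.Adj u v → 0 < kappaLLY G u v)
    (x y : V) (hxy : G.Adj x y) :
    kappaLLY G x y = 2 / d := by
  classical
  have hdist1 : G.dist x y = 1 := SimpleGraph.dist_eq_one_iff_adj.mpr hxy
  have hd' : (0:ℝ) < d := by exact_mod_cast hd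
  set S : Finset V := (G.neighborFinset x).erase y with hSdef
  set T : Finset V := (G.neighborFinset y).erase x with hTdef
  have hyS : y ∉ S := Finset.notMem_erase _ _
  have hxT : x ∉ T := Finset.notMem_erase _ _
  have hNx : G.neighborFinset x = insert y S :=
    (Finset.insert_erase (by simp [hxy])).symm
  have hNy : G.neighborFinset y = insert x T :=
    (Finset.insert_erase (by simp [hxy.symm])).symm
  have hSmem : ∀ z ∈ S, G.Adj x z ∧ z ≠ y := by
    intro z hz
    have h1 := Finset.mem_of_mem_erase hz
    exact ⟨by simpa using h1, Finset.ne_of_mem_erase hz⟩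
  have hTmem : ∀ w ∈ T, G.Adj y w ∧ w ≠ x := by
    intro w hw
    have h1 := Finset.mem_of_mem_erase hw
    exact ⟨by simpa using h1, Finset.ne_of_mem_erase hw⟩
  have hScard : S.card = d - 1 := by
    rw [hSdef, Finset.card_erase_of_mem (by simp [hxy])]
    simp [hreg x]
  have hTcard : T.card = d - 1 := by
    rw [hTdef, Finset.card_erase_of_mem (by simp [hxy.symm])]
    simp [hreg y]
  have hSx : x ∉ S := fun h => (G.irrefl (hSmem x h).1)
  have hTy : y ∉ T := fun h => (G.irrefl (hTmem y h).1)
  have hST : ∀ z ∈ S, z ∉ T := by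
    intro z hz hzT
    exact noTri h3 (hSmem z hz).1 ((hTmem z hzT).1.symm) hxy.symm
  -- non-adjacency facts
  have hSnadjy : ∀ z ∈ S, ¬ G.Adj z y := by
    intro z hz h
    exact noTri h3 (hSmem z hz).1 h hxy.symm
  have hTnadjx : ∀ w ∈ T, ¬ G.Adj x w := by
    intro w hw h
    exact noTri h3 h ((hTmem w hw).1.symm) hxy.symm
  have hSS : ∀ z ∈ S, ∀ z' ∈ S, z ≠ z' → ¬ G.Adj z z' := by
    intro z hz z' hz' hne h
    exact noTri h3 (hSmem z hz).1 h ((hSmem z' hz').1.symm)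
  have hTT : ∀ w ∈ T, ∀ w' ∈ T, w ≠ w' → ¬ G.Adj w w' := by
    intro w hw w' hw' hne h
    exact noTri h3 (hTmem w hw).1 h ((hTmem w' hw').1.symm)
  -- distance 3 fact
  have hdist3 : ∀ z ∈ S, ∀ w ∈ T, ¬ G.Adj z w → 3 ≤ G.dist z w := by
    intro z hz w hw hna
    have hzw : z ≠ w := fun h => hST z hz (h ▸ hw)
    refine three_le_dist hconn hzw hna ?_
    rintro m ⟨h1, h2⟩
    have hmx : m ≠ x := by
      rintro rfl
      exact hTnadjx w hw h2
    have hmy : m ≠ y := by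
      rintro rfl
      exact hSnadjy z hz h1
    exact noPent h5 (hSmem z hz).1 h1 h2 ((hTmem w hw).1.symm) hxy.symm
      hmx.symm (hTmem w hw).2.symm hzw (hSmem z hz).2 hmy
  -- Laplacian difference formula
  have hdeg : ∀ v : V, (G.degree v : ℝ) = (d : ℝ) := by
    intro v; exact_mod_cast hreg v
  have hD : ∀ f : V → ℝ, graphLap G f x - graphLap G f y
      = (d:ℝ)⁻¹ * (2*(f y - f x) + ((∑ z ∈ S, (f z - f x)) - (∑ w ∈ T, (f w - f y)))) := by
    intro f
    unfold graphLap
    rw [hdeg x, hdeg y, hNx, hNy, Finset.sum_insert hyS, Finset.sum_insert hxT]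
    ring
  set K := { r : ℝ | ∃ f : V → ℝ, IsLip1 G f ∧ f y - f x = G.dist x y ∧
      r = (graphLap G f x - graphLap G f y) / G.dist x y } with hKdef
  have hkappa : kappaLLY G x y = sInf K := rfl
  -- crude lower bound
  have hlb : ∀ r ∈ K, (-2 : ℝ) ≤ r := by
    rintro r ⟨f, hf, hfd, rfl⟩
    have hSb : ∀ z ∈ S, (-1 : ℝ) ≤ f z - f x := by
      intro z hz
      have h1 := hf z x
      have h2 : G.dist z x = 1 :=
        SimpleGraph.dist_eq_one_iff_adj.mpr (hSmem z hz).1.symm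
      rw [h2] at h1
      have := abs_le.mp h1
      push_cast at this
      linarith [this.1]
    have hTb : ∀ w ∈ T, f w - f y ≤ 1 := by
      intro w hw
      have h1 := hf w y
      have h2 : G.dist w y = 1 :=
        SimpleGraph.dist_eq_one_iff_adj.mpr (hTmem w hw).1.symm
      rw [h2] at h1
      have := abs_le.mp h1
      push_cast at this
      linarith [this.2]
    have hSsum : -((d:ℝ) - 1) ≤ ∑ z ∈ S, (f z - f x) := by
      have h := Finset.sum_le_sum hSb
      rw [Finset.sum_const, hScard] at h
      have : ((d - 1 : ℕ) : ℝ) = (d:ℝ) - 1 := by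
        push_cast [Nat.cast_sub hd]; ring
      simp only [nsmul_eq_mul] at h
      rw [this] at h
      linarith
    have hTsum : ∑ w ∈ T, (f w - f y) ≤ (d:ℝ) - 1 := by
      have h := Finset.sum_le_sum hTb
      rw [Finset.sum_const, hTcard] at h
      have : ((d - 1 : ℕ) : ℝ) = (d:ℝ) - 1 := by
        push_cast [Nat.cast_sub hd]; ring
      simp only [nsmul_eq_mul, mul_one] at h
      rw [this] at h
      linarith
    have hfd1 : f y - f x = 1 := by rw [hfd, hdist1]; norm_num
    rw [hD f, hdist1]
    push_cast
    rw [div_one]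
    have h1 : (-2:ℝ)*d ≤ 2*(f y - f x) + ((∑ z ∈ S, (f z - f x)) - ∑ w ∈ T, (f w - f y)) := by
      rw [hfd1]
      nlinarith [hd']
    have h2 := mul_le_mul_of_nonneg_left h1 (le_of_lt (inv_pos.mpr hd'))
    have heq : (d:ℝ)⁻¹ * (-2 * d) = -2 := by field_simp
    linarith
  have hbdd : BddBelow K := ⟨-2, hlb⟩
  -- the witness function f₁ = min (dist x ·) 2
  set f₁ : V → ℝ := fun v => min ((G.dist x v : ℝ)) 2 with hf₁def
  have hf₁lip : IsLip1 G f₁ := by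
    intro u v
    have h1 := abs_min_sub_min ((G.dist x u : ℝ)) ((G.dist x v : ℝ)) 2
    refine le_trans h1 ?_
    rw [abs_sub_le_iff]
    constructor
    · have h' : G.dist x u ≤ G.dist x v + G.dist v u := hconn.dist_triangle
      rw [SimpleGraph.dist_comm (u := v) (v := u)] at h'
      have := (Nat.cast_le (α := ℝ)).mpr h'
      push_cast at this
      linarith
    · have h' : G.dist x v ≤ G.dist x u + G.dist u v := hconn.dist_triangle
      have := (Nat.cast_le (α := ℝ)).mpr h'
      push_cast at this
      linarith
  have hf₁x : f₁ x = 0 := by simp [hf₁def, SimpleGraph.dist_self]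
  have hf₁y : f₁ y = 1 := by norm_num [hf₁def, hdist1]
  have hf₁d : f₁ y - f₁ x = G.dist x y := by rw [hf₁x, hf₁y, hdist1]; norm_num
  have hf₁S : ∀ z ∈ S, f₁ z = 1 := by
    intro z hz
    have h2 : G.dist x z = 1 := SimpleGraph.dist_eq_one_iff_adj.mpr (hSmem z hz).1
    norm_num [hf₁def, h2]
  have hf₁T : ∀ w ∈ T, f₁ w = 2 := by
    intro w hw
    have h2 : 2 ≤ G.dist x w :=
      two_le_dist hconn (Ne.symm (hTmem w hw).2) (hTnadjx w hw)
    have h2' : (2:ℝ) ≤ (G.dist x w : ℝ) := by exact_mod_cast h2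
    simp [hf₁def, min_eq_right h2']
  have hdm1 : ((d - 1 : ℕ) : ℝ) = (d:ℝ) - 1 := by push_cast [Nat.cast_sub hd]; ring
  have hmem : 2/(d:ℝ) ∈ K := by
    refine ⟨f₁, hf₁lip, hf₁d, ?_⟩
    have hs1 : ∑ z ∈ S, (f₁ z - f₁ x) = (d:ℝ) - 1 := by
      rw [Finset.sum_congr rfl (fun z hz => by rw [hf₁S z hz, hf₁x] : ∀ z ∈ S, f₁ z - f₁ x = 1 - 0)]
      rw [Finset.sum_const, hScard]
      simp [hdm1]
    have hs2 : ∑ w ∈ T, (f₁ w - f₁ y) = (d:ℝ) - 1 := by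
      rw [Finset.sum_congr rfl (fun w hw => by rw [hf₁T w hw, hf₁y] : ∀ w ∈ T, f₁ w - f₁ y = 2 - 1)]
      rw [Finset.sum_const, hTcard]
      simp [hdm1]; ring
    rw [hD f₁, hdist1, hs1, hs2, hf₁y, hf₁x]
    push_cast
    rw [div_one]
    field_simp
    ring
  -- dist helper casts
  have hd0 : ∀ a b : V, (0:ℝ) ≤ G.dist a b := fun a b => Nat.cast_nonneg _
  have hd1 : ∀ a b : V, a ≠ b → (1:ℝ) ≤ G.dist a b := by
    intro a b h
    have := hconn.pos_dist_of_ne h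
    exact_mod_cast this
  have hd2 : ∀ a b : V, a ≠ b → ¬ G.Adj a b → (2:ℝ) ≤ G.dist a b := by
    intro a b h h'
    exact_mod_cast two_le_dist hconn h h'
  have hd3 : ∀ z ∈ S, ∀ w ∈ T, ¬ G.Adj z w → (3:ℝ) ≤ G.dist z w := by
    intro z hz w hw h
    exact_mod_cast hdist3 z hz w hw h
  -- Hall's condition
  have hHall : ∀ s : Finset ↥T,
      s.card ≤ (s.biUnion (fun w => S.filter (fun z => G.Adj z w.1))).card := by
    by_contra hc
    push_neg at hc
    obtain ⟨s, hs⟩ := hc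
    set A : Finset V := s.image Subtype.val with hAdef
    have hAcard : A.card = s.card := Finset.card_image_of_injective _ Subtype.val_injective
    have hAT : ∀ w ∈ A, w ∈ T := by
      intro w hw
      obtain ⟨a, _, rfl⟩ := Finset.mem_image.mp hw
      exact a.2
    set W : Finset V := S.filter (fun z => ∃ w ∈ A, G.Adj z w) with hWdef
    have hWsub : W ⊆ S := Finset.filter_subset _ _
    have hWeq : W = s.biUnion (fun w => S.filter (fun z => G.Adj z w.1)) := by
      ext z
      simp only [hWdef, Finset.mem_filter, Finset.mem_biUnion, hAdef, Finset.mem_image]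
      constructor
      · rintro ⟨hzS, w, ⟨a, has, rfl⟩, hadj⟩
        exact ⟨a, has, hzS, hadj⟩
      · rintro ⟨a, has, hzS, hadj⟩
        exact ⟨hzS, a.1, ⟨a, has, rfl⟩, hadj⟩
    have hWA : W.card < A.card := by rw [hWeq, hAcard]; exact hs
    -- the test function on the base set
    set g₀ : V → ℝ := fun v =>
      if v = x then 0 else if v = y then 1 else if v ∈ A then 2
      else if v ∈ T then 0 else if v ∈ W then 1 else -1 with hg₀def
    have hgx : g₀ x = 0 := by simp [hg₀def]
    have hgy : g₀ y = 1 := by simp [hg₀def, (hxy.ne' : y ≠ x)]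
    have hgA : ∀ w ∈ A, g₀ w = 2 := by
      intro w hw
      have h1 := hAT w hw
      have hwx : w ≠ x := (hTmem w h1).2
      have hwy : w ≠ y := fun hh => hTy (hh ▸ h1)
      simp [hg₀def, hwx, hwy, hw]
    have hgTA : ∀ w ∈ T, w ∉ A → g₀ w = 0 := by
      intro w h1 hw
      have hwx : w ≠ x := (hTmem w h1).2
      have hwy : w ≠ y := fun hh => hTy (hh ▸ h1)
      simp [hg₀def, hwx, hwy, hw, h1]
    have hgW : ∀ z ∈ W, g₀ z = 1 := by
      intro z hz
      have hzS := hWsub hz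
      have hzx : z ≠ x := fun hh => hSx (hh ▸ hzS)
      have hzy : z ≠ y := (hSmem z hzS).2
      have hzT : z ∉ T := hST z hzS
      have hzA : z ∉ A := fun hh => hzT (hAT z hh)
      simp [hg₀def, hzx, hzy, hzA, hzT, hz]
    have hgSW : ∀ z ∈ S, z ∉ W → g₀ z = -1 := by
      intro z hzS hz
      have hzx : z ≠ x := fun hh => hSx (hh ▸ hzS)
      have hzy : z ≠ y := (hSmem z hzS).2
      have hzT : z ∉ T := hST z hzS
      have hzA : z ∉ A := fun hh => hzT (hAT z hh)
      simp [hg₀def, hzx, hzy, hzA, hzT, hz]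
    have hgS1 : ∀ z ∈ S, -1 ≤ g₀ z ∧ g₀ z ≤ 1 := by
      intro z hz
      by_cases h : z ∈ W
      · rw [hgW z h]; norm_num
      · rw [hgSW z hz h]; norm_num
    have hgT1 : ∀ w ∈ T, 0 ≤ g₀ w ∧ g₀ w ≤ 2 := by
      intro w hw
      by_cases h : w ∈ A
      · rw [hgA w h]; norm_num
      · rw [hgTA w hw h]; norm_num
    set B : Finset V := insert x (insert y (S ∪ T)) with hBdef
    have hBne : B.Nonempty := ⟨x, Finset.mem_insert_self _ _⟩
    have hxB : x ∈ B := Finset.mem_insert_self _ _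
    have hyB : y ∈ B := Finset.mem_insert_of_mem (Finset.mem_insert_self _ _)
    have hSB : ∀ z ∈ S, z ∈ B := fun z hz =>
      Finset.mem_insert_of_mem (Finset.mem_insert_of_mem (Finset.mem_union_left _ hz))
    have hTB : ∀ w ∈ T, w ∈ B := fun w hw =>
      Finset.mem_insert_of_mem (Finset.mem_insert_of_mem (Finset.mem_union_right _ hw))
    have hcat : ∀ b ∈ B, b = x ∨ b = y ∨ b ∈ S ∨ b ∈ T := by
      intro b hb
      rcases Finset.mem_insert.mp hb with h | h
      · exact Or.inl h
      rcases Finset.mem_insert.mp h with h' | h'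
      · exact Or.inr (Or.inl h')
      rcases Finset.mem_union.mp h' with h'' | h''
      · exact Or.inr (Or.inr (Or.inl h''))
      · exact Or.inr (Or.inr (Or.inr h''))
    have hcons : ∀ u ∈ B, ∀ v ∈ B, g₀ v ≤ g₀ u + G.dist u v := by
      intro u hu v hv
      by_cases hne : u = v
      · subst hne; simp [SimpleGraph.dist_self]
      rcases hcat u hu with hux | huy | huS | huT <;>
        rcases hcat v hv with hvx | hvy | hvS | hvT
      · exact absurd (hux.trans hvx.symm) hne
      · have h1 : g₀ u = 0 := by rw [hux]; exact hgx
        have h2 : g₀ v = 1 := by rw [hvy]; exact hgy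
        rw [h1, h2]; linarith [hd1 u v hne]
      · have h1 : g₀ u = 0 := by rw [hux]; exact hgx
        rcases hgS1 v hvS with ⟨h3, h4⟩
        rw [h1]; linarith [hd1 u v hne]
      · have h1 : g₀ u = 0 := by rw [hux]; exact hgx
        by_cases hA : v ∈ A
        · have h2 : g₀ v = 2 := hgA v hA
          have hna : ¬ G.Adj u v := by rw [hux]; exact hTnadjx v hvT
          rw [h1, h2]; linarith [hd2 u v hne hna]
        · have h2 : g₀ v = 0 := hgTA v hvT hA
          rw [h1, h2]; linarith [hd0 u v]
      · have h1 : g₀ u = 1 := by rw [huy]; exact hgy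
        have h2 : g₀ v = 0 := by rw [hvx]; exact hgx
        rw [h1, h2]; linarith [hd0 u v]
      · exact absurd (huy.trans hvy.symm) hne
      · have h1 : g₀ u = 1 := by rw [huy]; exact hgy
        rcases hgS1 v hvS with ⟨h3, h4⟩
        rw [h1]; linarith [hd0 u v]
      · have h1 : g₀ u = 1 := by rw [huy]; exact hgy
        rcases hgT1 v hvT with ⟨h3, h4⟩
        rw [h1]; linarith [hd1 u v hne]
      · have h2 : g₀ v = 0 := by rw [hvx]; exact hgx
        rcases hgS1 u huS with ⟨h3, h4⟩
        rw [h2]; linarith [hd1 u v hne]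
      · have h2 : g₀ v = 1 := by rw [hvy]; exact hgy
        by_cases hW : u ∈ W
        · have h1 : g₀ u = 1 := hgW u hW
          rw [h1, h2]; linarith [hd0 u v]
        · have h1 : g₀ u = -1 := hgSW u huS hW
          have hna : ¬ G.Adj u v := by rw [hvy]; exact hSnadjy u huS
          rw [h1, h2]; linarith [hd2 u v hne hna]
      · by_cases hWv : v ∈ W
        · have h2 : g₀ v = 1 := hgW v hWv
          by_cases hWu : u ∈ W
          · have h1 : g₀ u = 1 := hgW u hWu
            rw [h1, h2]; linarith [hd0 u v]
          · have h1 : g₀ u = -1 := hgSW u huS hWu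
            have hna : ¬ G.Adj u v := hSS u huS v hvS hne
            rw [h1, h2]; linarith [hd2 u v hne hna]
        · have h2 : g₀ v = -1 := hgSW v hvS hWv
          rcases hgS1 u huS with ⟨h3, h4⟩
          rw [h2]; linarith [hd0 u v]
      · by_cases hA : v ∈ A
        · have h2 : g₀ v = 2 := hgA v hA
          by_cases hWu : u ∈ W
          · have h1 : g₀ u = 1 := hgW u hWu
            rw [h1, h2]; linarith [hd1 u v hne]
          · have h1 : g₀ u = -1 := hgSW u huS hWu
            have hna : ¬ G.Adj u v := by
              intro hadj
              exact hWu (Finset.mem_filter.mpr ⟨huS, v, hA, hadj⟩)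
            rw [h1, h2]; linarith [hd3 u huS v hvT hna]
        · have h2 : g₀ v = 0 := hgTA v hvT hA
          rcases hgS1 u huS with ⟨h3, h4⟩
          rw [h2]; linarith [hd1 u v hne]
      · have h2 : g₀ v = 0 := by rw [hvx]; exact hgx
        rcases hgT1 u huT with ⟨h3, h4⟩
        rw [h2]; linarith [hd0 u v]
      · have h2 : g₀ v = 1 := by rw [hvy]; exact hgy
        rcases hgT1 u huT with ⟨h3, h4⟩
        rw [h2]; linarith [hd1 u v hne]
      · rcases hgT1 u huT with ⟨h3, h4⟩
        rcases hgS1 v hvS with ⟨h5, h6⟩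
        linarith [hd1 u v hne]
      · by_cases hA : v ∈ A
        · have h2 : g₀ v = 2 := hgA v hA
          by_cases hAu : u ∈ A
          · have h1 : g₀ u = 2 := hgA u hAu
            rw [h1, h2]; linarith [hd0 u v]
          · have h1 : g₀ u = 0 := hgTA u huT hAu
            have hna : ¬ G.Adj u v := hTT u huT v hvT hne
            rw [h1, h2]; linarith [hd2 u v hne hna]
        · have h2 : g₀ v = 0 := hgTA v hvT hA
          rcases hgT1 u huT with ⟨h3, h4⟩
          rw [h2]; linarith [hd0 u v]
    obtain ⟨F, hFlip, hFval⟩ := lipExtension hconn B hBne g₀ hcons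
    have hFx : F x = 0 := (hFval x hxB).trans hgx
    have hFy : F y = 1 := (hFval y hyB).trans hgy
    have hFd : F y - F x = (G.dist x y : ℝ) := by rw [hFx, hFy, hdist1]; norm_num
    have hr0K : ((graphLap G F x - graphLap G F y) / (G.dist x y : ℝ)) ∈ K :=
      ⟨F, hFlip, hFd, rfl⟩
    -- compute the value
    have hWc : S.filter (fun z => ∃ w ∈ A, G.Adj z w) = W := rfl
    have hsplitS : ∑ z ∈ S, (F z - F x) = 2*(W.card:ℝ) - ((d:ℝ) - 1) := by
      have e1 : ∑ z ∈ S.filter (fun z => ∃ w ∈ A, G.Adj z w), (F z - F x)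
          = (W.card : ℝ) := by
        rw [hWc]
        have hconst : ∀ z ∈ W, F z - F x = 1 := by
          intro z hz
          rw [hFval z (hSB z (hWsub hz)), hFx, hgW z hz]
          norm_num
        rw [Finset.sum_congr rfl hconst, Finset.sum_const, nsmul_eq_mul, mul_one]
      have e2 : ∑ z ∈ S.filter (fun z => ¬ ∃ w ∈ A, G.Adj z w), (F z - F x)
          = -(((d:ℝ) - 1) - W.card) := by
        have hconst : ∀ z ∈ S.filter (fun z => ¬ ∃ w ∈ A, G.Adj z w), F z - F x = -1 := by
          intro z hz
          have hzS := Finset.mem_of_mem_filter z hz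
          have hzW : z ∉ W := by
            intro hW
            exact (Finset.mem_filter.mp hz).2 ((Finset.mem_filter.mp hW).2)
          rw [hFval z (hSB z hzS), hFx, hgSW z hzS hzW]
          norm_num
        rw [Finset.sum_congr rfl hconst, Finset.sum_const, nsmul_eq_mul, mul_neg, mul_one]
        have hcc : ((S.filter (fun z => ¬ ∃ w ∈ A, G.Adj z w)).card : ℝ)
            = ((d:ℝ) - 1) - W.card := by
          have h := Finset.card_filter_add_card_filter_not
            (s := S) (p := fun z => ∃ w ∈ A, G.Adj z w)
          rw [hScard, hWc] at h
          have h2 : (W.card:ℝ) + ((S.filter (fun z => ¬ ∃ w ∈ A, G.Adj z w)).card : ℝ)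
              = ((d - 1 : ℕ) : ℝ) := by exact_mod_cast h
          rw [hdm1] at h2
          linarith
        rw [hcc]
      rw [← Finset.sum_filter_add_sum_filter_not S (fun z => ∃ w ∈ A, G.Adj z w)
        (fun z => F z - F x), e1, e2]
      ring
    have hTA : T.filter (fun w => w ∈ A) = A := by
      ext w
      simp only [Finset.mem_filter]
      exact ⟨fun h => h.2, fun h => ⟨hAT w h, h⟩⟩
    have hsplitT : ∑ w ∈ T, (F w - F y) = 2*(A.card:ℝ) - ((d:ℝ) - 1) := by
      have e1 : ∑ w ∈ T.filter (fun w => w ∈ A), (F w - F y) = (A.card : ℝ) := by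
        rw [hTA]
        have hconst : ∀ w ∈ A, F w - F y = 1 := by
          intro w hw
          rw [hFval w (hTB w (hAT w hw)), hFy, hgA w hw]
          norm_num
        rw [Finset.sum_congr rfl hconst, Finset.sum_const, nsmul_eq_mul, mul_one]
      have e2 : ∑ w ∈ T.filter (fun w => ¬ w ∈ A), (F w - F y)
          = -(((d:ℝ) - 1) - A.card) := by
        have hconst : ∀ w ∈ T.filter (fun w => ¬ w ∈ A), F w - F y = -1 := by
          intro w hw
          have hwT := Finset.mem_of_mem_filter w hw
          have hwA : w ∉ A := (Finset.mem_filter.mp hw).2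
          rw [hFval w (hTB w hwT), hFy, hgTA w hwT hwA]
          norm_num
        rw [Finset.sum_congr rfl hconst, Finset.sum_const, nsmul_eq_mul, mul_neg, mul_one]
        have hcc : ((T.filter (fun w => ¬ w ∈ A)).card : ℝ) = ((d:ℝ) - 1) - A.card := by
          have h := Finset.card_filter_add_card_filter_not
            (s := T) (p := fun w => w ∈ A)
          rw [hTcard, hTA] at h
          have h2 : (A.card:ℝ) + ((T.filter (fun w => ¬ w ∈ A)).card : ℝ)
              = ((d - 1 : ℕ) : ℝ) := by exact_mod_cast h
          rw [hdm1] at h2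
          linarith
        rw [hcc]
      rw [← Finset.sum_filter_add_sum_filter_not T (fun w => w ∈ A)
        (fun w => F w - F y), e1, e2]
      ring
    have hr0le : (graphLap G F x - graphLap G F y) / (G.dist x y : ℝ) ≤ 0 := by
      rw [hD F, hdist1, hsplitS, hsplitT, hFy, hFx]
      push_cast
      rw [div_one]
      have hAW : (W.card : ℝ) + 1 ≤ (A.card : ℝ) := by exact_mod_cast hWA
      have hX : 2*((1:ℝ) - 0) + ((2*(W.card:ℝ) - ((d:ℝ) - 1))
          - (2*(A.card:ℝ) - ((d:ℝ) - 1))) ≤ 0 := by linarith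
      have hinv : (0:ℝ) ≤ (d:ℝ)⁻¹ := le_of_lt (inv_pos.mpr hd')
      nlinarith
    have hk := hpos x y hxy
    rw [hkappa] at hk
    have := csInf_le hbdd hr0K
    linarith
  -- perfect matching
  obtain ⟨σ, hσinj, hσmem⟩ := (Finset.all_card_le_biUnion_card_iff_exists_injective
    (fun w : ↥T => S.filter (fun z => G.Adj z w.1))).mp hHall
  have hσS : ∀ a : ↥T, σ a ∈ S ∧ G.Adj (σ a) a.1 := by
    intro a
    exact Finset.mem_filter.mp (hσmem a)
  have himg : Finset.univ.image σ = S := by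
    apply Finset.eq_of_subset_of_card_le
    · intro z hz
      obtain ⟨a, _, rfl⟩ := Finset.mem_image.mp hz
      exact (hσS a).1
    · rw [Finset.card_image_of_injective _ hσinj, Finset.card_univ, Fintype.card_coe,
        hScard, hTcard]
  have hge : ∀ r ∈ K, 2/(d:ℝ) ≤ r := by
    rintro r ⟨f, hf, hfd, rfl⟩
    have hfd1 : f y - f x = 1 := by rw [hfd, hdist1]; norm_num
    have hterm : ∀ a : ↥T, f a.1 - f y ≤ f (σ a) - f x := by
      intro a
      have hadj := (hσS a).2
      have hda : G.dist a.1 (σ a) = 1 :=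
        SimpleGraph.dist_eq_one_iff_adj.mpr hadj.symm
      have h1 := hf a.1 (σ a)
      rw [hda] at h1
      have h2 := abs_le.mp h1
      push_cast at h2
      linarith [h2.2]
    have hsum : ∑ w ∈ T, (f w - f y) ≤ ∑ z ∈ S, (f z - f x) := by
      rw [← Finset.sum_attach T (fun w => f w - f y)]
      have h2 : ∑ z ∈ S, (f z - f x) = ∑ a : ↥T, (f (σ a) - f x) := by
        rw [← himg, Finset.sum_image (fun a _ b _ h => hσinj h)]
      rw [h2, ← Finset.univ_eq_attach]
      exact Finset.sum_le_sum (fun a _ => hterm a)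
    rw [hD f, hdist1]
    push_cast
    rw [div_one]
    have h3 : (2:ℝ) ≤ 2*(f y - f x) + ((∑ z ∈ S, (f z - f x)) - ∑ w ∈ T, (f w - f y)) := by
      rw [hfd1]; linarith
    have hinv : (0:ℝ) ≤ (d:ℝ)⁻¹ := le_of_lt (inv_pos.mpr hd')
    have h4 := mul_le_mul_of_nonneg_left h3 hinv
    have heq : (d:ℝ)⁻¹ * 2 = 2/(d:ℝ) := by ring
    linarith
  rw [hkappa]
  exact le_antisymm (csInf_le hbdd hmem) (le_csInf ⟨_, hmem⟩ hge)
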